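/- Let d ≥ 4 and let e, k ∈ E be signed unit vectors with k ≠ e. Then P_k(H_{{0,e}} < ∞) < 1/2: the probability that the simple random walk started at k ever visits the two-point set {0, e} is strictly less than one half. -/
import Mathlib


open scoped Classical
noncomputable section

/-- `v` is one of the `2d` signed unit vectors of `ℤ^d`. -/
def IsUnitVec {d : ℕ} (v : Fin d → ℤ) : Prop := ∑ k, |v k| = 1

/-- The steps of a simple random walk, indexed by a direction and a sign:
`step (i, true) = e_i` and `step (i, false) = -e_i`. -/
def step {d : ℕ} (e : Fin d × Bool) : Fin d → ℤ :=
  fun k => if k = e.1 then (if e.2 then 1 else -1) else 0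

/-- The position after `m` steps of the walk started at `k` following the word `ω`. -/
def walkPos {d : ℕ} (k : Fin d → ℤ) {M : ℕ} (ω : Fin M → Fin d × Bool) (m : ℕ) :
    Fin d → ℤ :=
  k + ∑ j : Fin M, if (j : ℕ) < m then step (ω j) else 0

/-- `P_k(H_Λ < ∞)`: the probability that the simple random walk on `ℤ^d` started at `k`
visits `Λ` at some time `m ≥ 1`.  Since the steps are independent and uniform on the
`2d` signed unit vectors, this equals the supremum over finite horizons `M` of the
fraction of the `(2d)^M` equiprobable step words of length `M` whose walk visits `Λ`
by time `M`. -/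
def hitProb {d : ℕ} (k : Fin d → ℤ) (Λ : Set (Fin d → ℤ)) : ℝ :=
  ⨆ M : ℕ,
    ((Finset.univ.filter fun ω : Fin M → Fin d × Bool =>
        ∃ m, 1 ≤ m ∧ m ≤ M ∧ walkPos k ω m ∈ Λ).card : ℝ) / (2 * d) ^ M


namespace Wk
variable {d : ℕ}

variable {d : ℕ}

def Qs (x : Fin d → ℤ) : ℤ := ∑ i, (x i)^2

lemma Qs_nonneg (x : Fin d → ℤ) : 0 ≤ Qs x :=
  Finset.sum_nonneg fun i _ => sq_nonneg _

lemma Qs_pos {x : Fin d → ℤ} (hx : x ≠ 0) : 1 ≤ Qs x := by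
  by_contra h
  push_neg at h
  have h0 : Qs x = 0 := le_antisymm (by omega) (Qs_nonneg x)
  apply hx
  funext i
  have := (Finset.sum_eq_zero_iff_of_nonneg (fun i _ => sq_nonneg (x i))).1 h0 i (Finset.mem_univ i)
  have : x i = 0 := by nlinarith
  simpa using this

lemma Qs_zero : Qs (0 : Fin d → ℤ) = 0 := by simp [Qs]

def hf (x : Fin d → ℤ) : ℝ := 1/((Qs x : ℝ) + 2) + if x = 0 then 1/2 else 0

lemma hf_nonneg (x : Fin d → ℤ) : 0 ≤ hf x := by
  have h1 : (0:ℝ) ≤ (Qs x : ℝ) := by exact_mod_cast Qs_nonneg x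
  have : (0:ℝ) < (Qs x : ℝ) + 2 := by linarith
  unfold hf
  have : (0:ℝ) ≤ 1/((Qs x : ℝ) + 2) := by positivity
  split <;> linarith

lemma hf_zero : hf (0 : Fin d → ℤ) = 1 := by
  simp [hf, Qs_zero]; norm_num

lemma hf_of_Q_one {x : Fin d → ℤ} (hx : Qs x = 1) : hf x = 1/3 := by
  have hx0 : x ≠ 0 := by intro h; rw [h, Qs_zero] at hx; exact one_ne_zero hx.symm
  simp [hf, hx, hx0]
  norm_num

lemma hf_le_of_Q_two {x : Fin d → ℤ} (hx : 2 ≤ Qs x) : hf x ≤ 1/4 := by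
  have hx0 : x ≠ 0 := by intro h; rw [h, Qs_zero] at hx; omega
  have h2 : (4:ℝ) ≤ (Qs x : ℝ) + 2 := by
    have : (2:ℝ) ≤ (Qs x : ℝ) := by exact_mod_cast hx
    linarith
  have h3 := one_div_le_one_div_of_le (by norm_num : (0:ℝ) < 4) h2
  simp only [hf, if_neg hx0, add_zero]
  exact h3



lemma Qs_add_step (x : Fin d → ℤ) (i : Fin d) (b : Bool) :
    Qs (x + step (i, b)) = Qs x + 2 * (if b then 1 else -1) * x i + 1 := by
  unfold Qs
  have h1 : ∀ j : Fin d, ((x + step (i,b)) j)^2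
      = (x j)^2 + (if j = i then 2 * (if b then 1 else -1) * x j + 1 else 0) := by
    intro j
    by_cases hj : j = i
    · subst hj
      simp only [Pi.add_apply, step, if_pos rfl]
      cases b <;> simp <;> ring
    · simp [Pi.add_apply, step, hj]
  calc ∑ j, ((x + step (i,b)) j)^2
      = ∑ j, ((x j)^2 + (if j = i then 2 * (if b then 1 else -1) * x j + 1 else 0)) := by
        exact Finset.sum_congr rfl fun j _ => h1 j
    _ = (∑ j, (x j)^2) + (2 * (if b then 1 else -1) * x i + 1) := by
        rw [Finset.sum_add_distrib, Finset.sum_ite_eq' Finset.univ i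
          (fun j => 2 * (if b then 1 else -1) * x j + 1)]
        simp
    _ = _ := by ring

lemma Qs_step (s : Fin d × Bool) : Qs (step s) = 1 := by
  obtain ⟨i, b⟩ := s
  have := Qs_add_step (0 : Fin d → ℤ) i b
  simpa [Qs] using this

lemma step_inj {s s' : Fin d × Bool} (h : step s = step s') : s = s' := by
  obtain ⟨i, b⟩ := s
  obtain ⟨i', b'⟩ := s'
  have h1 := congrFun h i
  simp only [step] at h1
  by_cases hii : i = i'
  · subst hii
    simp only [if_pos rfl] at h1
    cases b <;> cases b' <;> simp_all
  · exfalso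
    rw [if_neg hii] at h1
    cases b <;> simp_all


lemma key_ineq (u t : ℝ) (hu : 3 ≤ u) (ht : t^2 ≤ 4*(u-2)) :
    1/((u+1)+t) + 1/((u+1)-t) ≤ 2/(u+1) + 2*t^2/((u+1)*((u+1)^2-4*(u-2))) := by
  set v := u + 1 with hv
  have hv4 : 4 ≤ v := by linarith
  have hW : (0:ℝ) < v^2 - 4*(u-2) := by nlinarith
  have htv : t^2 < v^2 := by nlinarith
  have h1 : 0 < v + t := by
    by_contra hle
    push_neg at hle
    have h2 : (0:ℝ) ≤ v - t := by linarith
    nlinarith [mul_nonneg (neg_nonneg.2 hle) h2]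
  have h2 : 0 < v - t := by
    by_contra hle
    push_neg at hle
    have h3 : (0:ℝ) ≤ v + t := by linarith
    nlinarith [mul_nonneg h3 (neg_nonneg.2 hle)]
  have hvpos : (0:ℝ) < v := by linarith
  have hstep1 : 1/(v+t) + 1/(v-t) = 2*v/(v^2 - t^2) := by
    rw [div_add_div _ _ (ne_of_gt h1) (ne_of_gt h2)]
    congr 1 <;> ring
  have hden : (0:ℝ) < v^2 - t^2 := by nlinarith
  rw [hstep1]
  have hgoal : 2*v/(v^2 - t^2) - 2/v = 2*t^2/(v*(v^2-t^2)) := by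
    field_simp
    ring
  have hlast : 2*t^2/(v*(v^2-t^2)) ≤ 2*t^2/(v*(v^2-4*(u-2))) := by
    apply div_le_div_of_nonneg_left (by positivity) (by positivity)
    have : v^2 - 4*(u-2) ≤ v^2 - t^2 := by linarith
    nlinarith
  linarith [hgoal, hlast]


lemma Qs_neg (x : Fin d → ℤ) : Qs (-x) = Qs x := by
  simp [Qs]

lemma sq_le_Qs (x : Fin d → ℤ) (i : Fin d) : (x i)^2 ≤ Qs x :=
  Finset.single_le_sum (fun j _ => sq_nonneg (x j)) (Finset.mem_univ i)

lemma Qs_cast (x : Fin d → ℤ) : ((Qs x : ℝ)) = ∑ i, ((x i : ℝ))^2 := by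
  push_cast [Qs]; ring

lemma delta_sum_le (x : Fin d → ℤ) :
    (∑ s : Fin d × Bool, if x + step s = 0 then (1/2:ℝ) else 0)
      ≤ if Qs x = 1 then 1/2 else 0 := by
  have hQmem : ∀ s : Fin d × Bool, x + step s = 0 → Qs x = 1 := by
    intro s hs
    have hx : x = -step s := eq_neg_of_add_eq_zero_left hs
    rw [hx, Qs_neg, Qs_step]
  rw [← Finset.sum_filter]
  have hcard : (Finset.univ.filter fun s : Fin d × Bool => x + step s = 0).card ≤ 1 := by
    apply Finset.card_le_one.2
    intro a ha b hb
    simp only [Finset.mem_filter] at ha hb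
    have : step a = step b := by
      have := ha.2.trans hb.2.symm
      exact add_left_cancel this
    exact step_inj this
  rw [Finset.sum_const, nsmul_eq_mul]
  by_cases hQ : Qs x = 1
  · rw [if_pos hQ]
    have : ((Finset.univ.filter fun s : Fin d × Bool => x + step s = 0).card : ℝ) ≤ 1 := by
      exact_mod_cast hcard
    nlinarith
  · rw [if_neg hQ]
    have hempty : (Finset.univ.filter fun s : Fin d × Bool => x + step s = 0) = ∅ := by
      apply Finset.filter_eq_empty_iff.2
      intro s _ hs
      exact hQ (hQmem s hs)
    rw [hempty]
    simp

lemma Qs_ge_three (x : Fin d → ℤ) (hx : x ≠ 0) : (3:ℝ) ≤ (Qs x : ℝ) + 2 := by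
  have := Qs_pos hx
  have : (1:ℝ) ≤ (Qs x : ℝ) := by exact_mod_cast this
  linarith

lemma fsum_le (hd : 4 ≤ d) (x : Fin d → ℤ) (hx : x ≠ 0) :
    ∑ s : Fin d × Bool, (1:ℝ)/((Qs (x + step s) : ℝ) + 2)
      ≤ 2*(d:ℝ)/((Qs x:ℝ)+3)
        + 8*(Qs x:ℝ)/(((Qs x:ℝ)+3)*(((Qs x:ℝ)+3)^2-4*(Qs x:ℝ))) := by
  set q : ℝ := (Qs x : ℝ) with hq
  have hq1 : (1:ℝ) ≤ q := by rw [hq]; exact_mod_cast Qs_pos hx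
  rw [Fintype.sum_prod_type]
  have hterm : ∀ i : Fin d,
      (∑ b : Bool, (1:ℝ)/((Qs (x + step (i, b)) : ℝ) + 2))
        ≤ 2/(q+3) + 2*(2*(x i : ℝ))^2/((q+3)*((q+3)^2-4*q)) := by
    intro i
    rw [Fintype.sum_bool]
    have htrue : ((Qs (x + step (i, true)) : ℝ) + 2) = ((q+2)+1) + (2*(x i : ℝ)) := by
      rw [Qs_add_step]
      push_cast
      simp
      ring
    have hfalse : ((Qs (x + step (i, false)) : ℝ) + 2) = ((q+2)+1) - (2*(x i : ℝ)) := by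
      rw [Qs_add_step]
      push_cast
      simp
      ring
    rw [htrue, hfalse]
    have hkey := key_ineq (q+2) (2*(x i:ℝ)) (by linarith) ?ht
    · convert hkey using 3 <;> ring
    · have h1 : ((x i : ℝ))^2 ≤ q := by
        rw [hq]
        exact_mod_cast sq_le_Qs x i
      nlinarith
  calc (∑ i : Fin d, ∑ b : Bool, (1:ℝ)/((Qs (x + step (i, b)) : ℝ) + 2))
      ≤ ∑ i : Fin d, (2/(q+3) + 2*(2*(x i : ℝ))^2/((q+3)*((q+3)^2-4*q))) :=
        Finset.sum_le_sum fun i _ => hterm i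
    _ = 2*(d:ℝ)/(q+3) + 8*q/((q+3)*((q+3)^2-4*q)) := by
        rw [Finset.sum_add_distrib, Finset.sum_const, Finset.card_univ, Fintype.card_fin,
          nsmul_eq_mul]
        have hsumsq : ∑ i : Fin d, (2*(x i:ℝ))^2 = 4*q := by
          rw [hq, Qs_cast]
          rw [Finset.mul_sum]
          exact Finset.sum_congr rfl fun i _ => by ring
        have : ∑ i : Fin d, 2*(2*(x i : ℝ))^2/((q+3)*((q+3)^2-4*q))
            = 8*q/((q+3)*((q+3)^2-4*q)) := by
          rw [← Finset.sum_div]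
          rw [show (∑ i : Fin d, 2*(2*(x i:ℝ))^2) = 2 * ∑ i : Fin d, (2*(x i:ℝ))^2 by
            rw [Finset.mul_sum]]
          rw [hsumsq]
          ring_nf
        rw [this]
        ring

lemma superh (hd : 4 ≤ d) (x : Fin d → ℤ) :
    ∑ s : Fin d × Bool, hf (x + step s) ≤ (2*(d:ℝ)) * hf x := by
  have hd' : (4:ℝ) ≤ (d:ℝ) := by exact_mod_cast hd
  by_cases hx0 : x = 0
  · subst hx0
    have hterm : ∀ s : Fin d × Bool, hf ((0 : Fin d → ℤ) + step s) = 1/3 := by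
      intro s
      rw [zero_add]
      exact hf_of_Q_one (Qs_step s)
    rw [Finset.sum_congr rfl fun s _ => hterm s]
    rw [Finset.sum_const, Finset.card_univ, nsmul_eq_mul, hf_zero]
    simp only [Fintype.card_prod, Fintype.card_fin, Fintype.card_bool]
    push_cast
    linarith
  · set q : ℝ := (Qs x : ℝ) with hq
    have hq1 : (1:ℝ) ≤ q := by rw [hq]; exact_mod_cast Qs_pos hx0
    have hsplit : ∑ s : Fin d × Bool, hf (x + step s)
        = (∑ s : Fin d × Bool, (1:ℝ)/((Qs (x + step s) : ℝ) + 2))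
          + (∑ s : Fin d × Bool, if x + step s = 0 then (1/2:ℝ) else 0) := by
      rw [← Finset.sum_add_distrib]
      exact Finset.sum_congr rfl fun s _ => rfl
    rw [hsplit]
    have hf1 := fsum_le hd x hx0
    have hf2 := delta_sum_le x
    rw [← hq] at hf1
    by_cases hQ1 : Qs x = 1
    · have hqval : q = 1 := by rw [hq, hQ1]; norm_num
      rw [hqval] at hf1
      rw [if_pos hQ1] at hf2
      rw [hf_of_Q_one hQ1]
      have hnum : 2*(d:ℝ)/(1+3) + 8*1/((1+3)*((1+3)^2-4*1)) = (d:ℝ)/2 + 1/6 := by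
        norm_num
        ring
      rw [hnum] at hf1
      linarith
    · have hq2 : (2:ℝ) ≤ q := by
        have : 2 ≤ Qs x := by
          have := Qs_pos hx0
          omega
        rw [hq]; exact_mod_cast this
      rw [if_neg hQ1] at hf2
      have hfx : hf x = 1/(q+2) := by
        rw [hf, if_neg hx0, ← hq, add_zero]
      rw [hfx]
      have hW : (0:ℝ) < (q+3)^2 - 4*q := by nlinarith
      have hq3 : (0:ℝ) < q + 3 := by linarith
      have hq2' : (0:ℝ) < q + 2 := by linarith
      have hid : 2*(d:ℝ)/(q+3) = 2*(d:ℝ)/(q+2) - 2*(d:ℝ)/((q+2)*(q+3)) := by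
        field_simp
        ring
      have hb : 8*q/((q+3)*((q+3)^2-4*q)) ≤ 2*(d:ℝ)/((q+2)*(q+3)) := by
        rw [div_le_div_iff₀ (by positivity) (by positivity)]
        nlinarith [mul_nonneg (mul_nonneg (by linarith : (0:ℝ) ≤ 2*(d:ℝ) - 8) hq3.le)
          (by nlinarith : (0:ℝ) ≤ (q+3)^2 - 4*q)]
      have : (∑ s : Fin d × Bool, (1:ℝ)/((Qs (x + step s) : ℝ) + 2))
          ≤ 2*(d:ℝ)/(q+2) := by
        calc _ ≤ 2*(d:ℝ)/(q+3) + 8*q/((q+3)*((q+3)^2-4*q)) := hf1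
          _ ≤ 2*(d:ℝ)/(q+2) := by rw [hid]; linarith
      have hrhs : (2*(d:ℝ)) * (1/(q+2)) = 2*(d:ℝ)/(q+2) := by ring
      rw [hrhs]
      linarith

lemma walkPos_zero {M : ℕ} (k : Fin d → ℤ) (ω : Fin M → Fin d × Bool) :
    walkPos k ω 0 = k := by
  simp [walkPos]

lemma walkPos_congr {M : ℕ} (k : Fin d → ℤ) {ω ω' : Fin M → Fin d × Bool} {m : ℕ}
    (h : ∀ j : Fin M, (j : ℕ) < m → ω j = ω' j) :
    walkPos k ω m = walkPos k ω' m := by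
  unfold walkPos
  congr 1
  apply Finset.sum_congr rfl
  intro j _
  by_cases hj : (j : ℕ) < m
  · rw [if_pos hj, if_pos hj, h j hj]
  · rw [if_neg hj, if_neg hj]

lemma walkPos_succ {M : ℕ} (k : Fin d → ℤ) (ω : Fin M → Fin d × Bool) (T : Fin M) :
    walkPos k ω ((T : ℕ) + 1) = walkPos k ω (T : ℕ) + step (ω T) := by
  unfold walkPos
  have hsplit : ∀ j : Fin M, (if (j:ℕ) < (T:ℕ)+1 then step (ω j) else 0)
      = (if (j:ℕ) < (T:ℕ) then step (ω j) else 0) + (if j = T then step (ω j) else 0) := by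
    intro j
    by_cases hj : j = T
    · subst hj
      rw [if_pos (by omega), if_pos rfl, if_neg (by omega), zero_add]
    · have hne : (j:ℕ) ≠ (T:ℕ) := fun hc => hj (Fin.ext hc)
      by_cases hlt : (j:ℕ) < (T:ℕ)
      · rw [if_pos (by omega), if_pos hlt, if_neg hj, add_zero]
      · rw [if_neg (by omega), if_neg hlt, if_neg hj, add_zero]
  rw [Finset.sum_congr rfl fun j _ => hsplit j, Finset.sum_add_distrib,
    Finset.sum_ite_eq' Finset.univ T (fun j => step (ω j))]
  rw [if_pos (Finset.mem_univ T)]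
  rw [add_assoc]

lemma sum_update {α β : Type*} [Fintype α] [DecidableEq α] [Fintype β]
    (f : (α → β) → ℝ) (t : α) :
    ∑ ω : α → β, ∑ s : β, f (Function.update ω t s)
      = (Fintype.card β : ℝ) * ∑ ω : α → β, f ω := by
  have h1 : ∑ ω : α → β, ∑ s : β, f (Function.update ω t s)
      = ∑ p : (α → β) × β, f (Function.update p.1 t p.2) := by
    rw [Fintype.sum_prod_type]
  have leftinv : ∀ p : (α → β) × β,
      (Function.update (Function.update p.1 t p.2) t (p.1 t),
        (Function.update p.1 t p.2) t) = p := by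
    intro p
    rw [Function.update_idem, Function.update_eq_self, Function.update_self]
  let ψ : (α → β) × β ≃ (α → β) × β :=
    { toFun := fun p => (Function.update p.1 t p.2, p.1 t)
      invFun := fun p => (Function.update p.1 t p.2, p.1 t)
      left_inv := leftinv
      right_inv := leftinv }
  have h2 : ∑ p : (α → β) × β, f (Function.update p.1 t p.2)
      = ∑ p : (α → β) × β, f p.1 :=
    Equiv.sum_comp ψ (fun p => f p.1)
  have h3 : ∀ ω : α → β, (∑ _s : β, f ω) = (Fintype.card β : ℝ) * f ω := fun ω => by
    rw [Finset.sum_const, Finset.card_univ, nsmul_eq_mul]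
  rw [h1, h2, Fintype.sum_prod_type]
  rw [Finset.sum_congr rfl fun ω _ => h3 ω, ← Finset.mul_sum]

def tau (k : Fin d → ℤ) (Λ : Set (Fin d → ℤ)) {M : ℕ} (ω : Fin M → Fin d × Bool) : ℕ :=
  sInf {m | (1 ≤ m ∧ walkPos k ω m ∈ Λ) ∨ m = M}

lemma tau_spec (k : Fin d → ℤ) (Λ : Set (Fin d → ℤ)) {M : ℕ} (ω : Fin M → Fin d × Bool) :
    (1 ≤ tau k Λ ω ∧ walkPos k ω (tau k Λ ω) ∈ Λ) ∨ tau k Λ ω = M :=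
  Nat.sInf_mem (⟨M, Or.inr rfl⟩ : Set.Nonempty {m | (1 ≤ m ∧ walkPos k ω m ∈ Λ) ∨ m = M})

lemma tau_le (k : Fin d → ℤ) (Λ : Set (Fin d → ℤ)) {M : ℕ} (ω : Fin M → Fin d × Bool)
    {m : ℕ} (hm : (1 ≤ m ∧ walkPos k ω m ∈ Λ) ∨ m = M) : tau k Λ ω ≤ m :=
  Nat.sInf_le hm

lemma tau_le_M (k : Fin d → ℤ) (Λ : Set (Fin d → ℤ)) {M : ℕ} (ω : Fin M → Fin d × Bool) :
    tau k Λ ω ≤ M :=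
  tau_le k Λ ω (Or.inr rfl)

lemma walkPos_update_eq {M : ℕ} (k : Fin d → ℤ) (ω : Fin M → Fin d × Bool) (T : Fin M)
    (s : Fin d × Bool) {m : ℕ} (hm : m ≤ (T : ℕ)) :
    walkPos k (Function.update ω T s) m = walkPos k ω m := by
  apply walkPos_congr
  intro j hj
  apply Function.update_of_ne
  intro hc
  subst hc
  omega

lemma tau_update (k : Fin d → ℤ) (Λ : Set (Fin d → ℤ)) {M : ℕ} (ω : Fin M → Fin d × Bool)
    (T : Fin M) (s : Fin d × Bool) (h : tau k Λ ω ≤ (T : ℕ)) :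
    tau k Λ (Function.update ω T s) = tau k Λ ω := by
  have hTM : (T : ℕ) < M := T.isLt
  rcases tau_spec k Λ ω with ⟨h1, h2⟩ | hM
  · have hpos := walkPos_update_eq k ω T s (m := tau k Λ ω) h
    have hle : tau k Λ (Function.update ω T s) ≤ tau k Λ ω :=
      tau_le k Λ _ (Or.inl ⟨h1, by rw [hpos]; exact h2⟩)
    rcases tau_spec k Λ (Function.update ω T s) with ⟨h1', h2'⟩ | hM'
    · have hle' : tau k Λ (Function.update ω T s) ≤ (T : ℕ) := le_trans hle h
      have hpos' := walkPos_update_eq k ω T s (m := tau k Λ (Function.update ω T s)) hle'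
      have hge : tau k Λ ω ≤ tau k Λ (Function.update ω T s) :=
        tau_le k Λ ω (Or.inl ⟨h1', by rw [← hpos']; exact h2'⟩)
      omega
    · omega
  · omega

lemma tau_update_gt (k : Fin d → ℤ) (Λ : Set (Fin d → ℤ)) {M : ℕ}
    (ω : Fin M → Fin d × Bool) (T : Fin M) (s : Fin d × Bool)
    (h : (T : ℕ) < tau k Λ ω) : (T : ℕ) < tau k Λ (Function.update ω T s) := by
  by_contra hle
  push_neg at hle
  have := tau_update k Λ (Function.update ω T s) T (ω T) hle
  rw [Function.update_idem, Function.update_eq_self] at this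
  omega

lemma cardE (d : ℕ) : (Fintype.card (Fin d × Bool) : ℝ) = 2 * (d : ℝ) := by
  simp [Fintype.card_prod]
  ring

lemma one_step {M : ℕ} (hd0 : 0 < d) (k : Fin d → ℤ) (Λ : Set (Fin d → ℤ))
    (F : (Fin d → ℤ) → ℝ)
    (hFs : ∀ x, ∑ s : Fin d × Bool, F (x + step s) ≤ (2 * (d : ℝ)) * F x)
    (T : Fin M) :
    ∑ ω : Fin M → Fin d × Bool, F (walkPos k ω (min (tau k Λ ω) ((T : ℕ) + 1)))
      ≤ ∑ ω : Fin M → Fin d × Bool, F (walkPos k ω (min (tau k Λ ω) (T : ℕ))) := by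
  have hcard : (0 : ℝ) < (Fintype.card (Fin d × Bool) : ℝ) := by
    rw [cardE]
    have : (1:ℝ) ≤ (d:ℝ) := by exact_mod_cast hd0
    linarith
  have hmain : ∀ ω : Fin M → Fin d × Bool,
      (∑ s : Fin d × Bool, F (walkPos k (Function.update ω T s)
        (min (tau k Λ (Function.update ω T s)) ((T : ℕ) + 1))))
      ≤ (Fintype.card (Fin d × Bool) : ℝ) * F (walkPos k ω (min (tau k Λ ω) (T : ℕ))) := by
    intro ω
    by_cases hτ : tau k Λ ω ≤ (T : ℕ)
    · have hterm : ∀ s : Fin d × Bool,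
          F (walkPos k (Function.update ω T s)
            (min (tau k Λ (Function.update ω T s)) ((T : ℕ) + 1)))
          = F (walkPos k ω (min (tau k Λ ω) (T : ℕ))) := by
        intro s
        rw [tau_update k Λ ω T s hτ, min_eq_left (by omega), min_eq_left hτ,
          walkPos_update_eq k ω T s hτ]
      rw [Finset.sum_congr rfl fun s _ => hterm s, Finset.sum_const, Finset.card_univ,
        nsmul_eq_mul]
    · push_neg at hτ
      have hterm : ∀ s : Fin d × Bool,
          F (walkPos k (Function.update ω T s)
            (min (tau k Λ (Function.update ω T s)) ((T : ℕ) + 1)))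
          = F (walkPos k ω (T : ℕ) + step s) := by
        intro s
        have h1 := tau_update_gt k Λ ω T s hτ
        rw [min_eq_right (by omega)]
        rw [walkPos_succ k (Function.update ω T s) T, Function.update_self,
          walkPos_update_eq k ω T s (le_refl _)]
      rw [Finset.sum_congr rfl fun s _ => hterm s]
      rw [min_eq_right (by omega)]
      calc ∑ s : Fin d × Bool, F (walkPos k ω (T : ℕ) + step s)
          ≤ (2 * (d : ℝ)) * F (walkPos k ω (T : ℕ)) := hFs _
        _ = (Fintype.card (Fin d × Bool) : ℝ) * F (walkPos k ω (T : ℕ)) := by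
            rw [cardE]
  have hsum := sum_update
    (f := fun ω : Fin M → Fin d × Bool => F (walkPos k ω (min (tau k Λ ω) ((T : ℕ) + 1)))) T
  have h5 : (Fintype.card (Fin d × Bool) : ℝ)
        * ∑ ω : Fin M → Fin d × Bool, F (walkPos k ω (min (tau k Λ ω) ((T : ℕ) + 1)))
      ≤ (Fintype.card (Fin d × Bool) : ℝ)
        * ∑ ω : Fin M → Fin d × Bool, F (walkPos k ω (min (tau k Λ ω) (T : ℕ))) := by
    rw [← hsum, Finset.mul_sum]
    exact Finset.sum_le_sum fun ω _ => hmain ω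
  exact le_of_mul_le_mul_left h5 hcard

lemma mart {M : ℕ} (hd0 : 0 < d) (k : Fin d → ℤ) (Λ : Set (Fin d → ℤ))
    (F : (Fin d → ℤ) → ℝ)
    (hFs : ∀ x, ∑ s : Fin d × Bool, F (x + step s) ≤ (2 * (d : ℝ)) * F x) :
    ∀ t, t ≤ M → ∑ ω : Fin M → Fin d × Bool, F (walkPos k ω (min (tau k Λ ω) t))
      ≤ (2 * (d : ℝ)) ^ M * F k := by
  intro t
  induction t with
  | zero =>
    intro _
    have : ∀ ω : Fin M → Fin d × Bool, F (walkPos k ω (min (tau k Λ ω) 0)) = F k := by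
      intro ω
      rw [Nat.min_zero, walkPos_zero]
    rw [Finset.sum_congr rfl fun ω _ => this ω, Finset.sum_const, Finset.card_univ,
      nsmul_eq_mul]
    apply le_of_eq
    congr 1
    rw [Fintype.card_fun, Fintype.card_prod, Fintype.card_fin, Fintype.card_bool,
      Fintype.card_fin]
    push_cast
    ring
  | succ t ih =>
    intro ht
    have htM : t < M := by omega
    have hstep := one_step hd0 k Λ F hFs (T := ⟨t, htM⟩)
    have hcoe : ((⟨t, htM⟩ : Fin M) : ℕ) = t := rfl
    rw [hcoe] at hstep
    exact le_trans hstep (ih (by omega))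

lemma stopping {M : ℕ} (hd0 : 0 < d) (k : Fin d → ℤ) (Λ : Set (Fin d → ℤ))
    (F : (Fin d → ℤ) → ℝ) (hF0 : ∀ x, 0 ≤ F x)
    (hFs : ∀ x, ∑ s : Fin d × Bool, F (x + step s) ≤ (2 * (d : ℝ)) * F x)
    (hFΛ : ∀ y ∈ Λ, (4/3 : ℝ) ≤ F y) :
    (4/3 : ℝ) * ((Finset.univ.filter fun ω : Fin M → Fin d × Bool =>
        ∃ m, 1 ≤ m ∧ m ≤ M ∧ walkPos k ω m ∈ Λ).card : ℝ)
      ≤ (2 * (d : ℝ)) ^ M * F k := by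
  set S := Finset.univ.filter fun ω : Fin M → Fin d × Bool =>
    ∃ m, 1 ≤ m ∧ m ≤ M ∧ walkPos k ω m ∈ Λ with hS
  have hlow : ∀ ω ∈ S, (4/3 : ℝ) ≤ F (walkPos k ω (min (tau k Λ ω) M)) := by
    intro ω hω
    rw [hS, Finset.mem_filter] at hω
    obtain ⟨m, hm1, hmM, hmΛ⟩ := hω.2
    have hτle : tau k Λ ω ≤ m := tau_le k Λ ω (Or.inl ⟨hm1, hmΛ⟩)
    rw [min_eq_left (le_trans hτle hmM)]
    rcases tau_spec k Λ ω with ⟨_, h2⟩ | hM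
    · exact hFΛ _ h2
    · have hmeq : m = M := le_antisymm hmM (hM ▸ hτle)
      rw [hM]
      have hfin := hFΛ _ hmΛ
      rwa [hmeq] at hfin
  calc (4/3 : ℝ) * (S.card : ℝ) = (S.card : ℕ) • (4/3 : ℝ) := by
        rw [nsmul_eq_mul]; ring
    _ ≤ ∑ ω ∈ S, F (walkPos k ω (min (tau k Λ ω) M)) :=
        Finset.card_nsmul_le_sum S _ _ hlow
    _ ≤ ∑ ω : Fin M → Fin d × Bool, F (walkPos k ω (min (tau k Λ ω) M)) :=
        Finset.sum_le_sum_of_subset_of_nonneg (Finset.subset_univ S)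
          (fun ω _ _ => hF0 _)
    _ ≤ (2 * (d : ℝ)) ^ M * F k := mart hd0 k Λ F hFs M (le_refl M)

lemma Qs_of_unit {v : Fin d → ℤ} (hv : IsUnitVec v) : Qs v = 1 := by
  have habs : ∀ i, |v i| ≤ 1 := by
    intro i
    calc |v i| ≤ ∑ j, |v j| :=
          Finset.single_le_sum (fun j _ => abs_nonneg (v j)) (Finset.mem_univ i)
      _ = 1 := hv
  have hsq : ∀ i, (v i)^2 = |v i| := by
    intro i
    have h0 := abs_nonneg (v i)
    have h1 := habs i
    have : |v i| = 0 ∨ |v i| = 1 := by omega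
    rcases this with h | h
    · have hv0 : v i = 0 := abs_eq_zero.1 h
      rw [hv0]
      simp
    · rw [← sq_abs, h]
      ring
  unfold Qs
  rw [Finset.sum_congr rfl fun i _ => hsq i]
  exact hv

lemma unit_ne_zero {v : Fin d → ℤ} (hv : IsUnitVec v) : v ≠ 0 := by
  intro h
  have := Qs_of_unit hv
  rw [h, Qs_zero] at this
  exact one_ne_zero this.symm

lemma Qs_sub (k e : Fin d → ℤ) :
    Qs (k - e) = Qs k + Qs e - 2 * ∑ i, k i * e i := by
  unfold Qs
  have h : ∀ i, ((k - e) i)^2 = (k i)^2 + (e i)^2 - 2 * (k i * e i) := by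
    intro i
    simp only [Pi.sub_apply]
    ring
  rw [Finset.sum_congr rfl fun i _ => h i, Finset.sum_sub_distrib,
    Finset.sum_add_distrib, Finset.mul_sum]

lemma Qs_sub_ge_two {k e : Fin d → ℤ} (hk : IsUnitVec k) (he : IsUnitVec e)
    (hne : k ≠ e) : 2 ≤ Qs (k - e) := by
  have h1 : 1 ≤ Qs (k - e) := Qs_pos (sub_ne_zero.2 hne)
  have h2 := Qs_sub k e
  rw [Qs_of_unit hk, Qs_of_unit he] at h2
  omega

def HH (e : Fin d → ℤ) (x : Fin d → ℤ) : ℝ := hf x + hf (x - e)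

lemma HH_nonneg (e x : Fin d → ℤ) : 0 ≤ HH e x :=
  add_nonneg (hf_nonneg x) (hf_nonneg (x - e))

lemma HH_superh (hd : 4 ≤ d) (e x : Fin d → ℤ) :
    ∑ s : Fin d × Bool, HH e (x + step s) ≤ (2 * (d : ℝ)) * HH e x := by
  have h : ∀ s : Fin d × Bool, HH e (x + step s) = hf (x + step s) + hf ((x - e) + step s) := by
    intro s
    rw [HH, add_sub_right_comm]
  rw [Finset.sum_congr rfl fun s _ => h s, Finset.sum_add_distrib]
  have h1 := superh hd x
  have h2 := superh hd (x - e)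
  rw [HH]
  nlinarith [h1, h2]

lemma HH_on_target {e : Fin d → ℤ} (he : IsUnitVec e) :
    ∀ y ∈ ({0, e} : Set (Fin d → ℤ)), (4/3 : ℝ) ≤ HH e y := by
  have hQe : Qs e = 1 := Qs_of_unit he
  have hQne : Qs (-e) = 1 := by rw [Qs_neg]; exact hQe
  intro y hy
  rcases hy with h0 | he'
  · rw [h0, HH, zero_sub, hf_zero, hf_of_Q_one hQne]
    norm_num
  · rw [Set.mem_singleton_iff] at he'
    rw [he', HH, sub_self, hf_zero, hf_of_Q_one hQe]
    norm_num

lemma HH_at_start {e k : Fin d → ℤ} (he : IsUnitVec e) (hk : IsUnitVec k)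
    (hne : k ≠ e) : HH e k ≤ 7/12 := by
  rw [HH, hf_of_Q_one (Qs_of_unit hk)]
  have h2 := hf_le_of_Q_two (Qs_sub_ge_two hk he hne)
  linarith

end Wk

/-- **Appendix, main estimate.**  In dimension `d ≥ 4`, for signed unit vectors `k ≠ e`,
the probability that the simple random walk started at `k` ever visits the two-point
set `{0, e}` is strictly less than `1/2`. -/


theorem hitProb_pair_lt_half
    {d : ℕ} (hd : 4 ≤ d) (e k : Fin d → ℤ)
    (he : IsUnitVec e) (hk : IsUnitVec k) (hne : k ≠ e) :
    hitProb k ({0, e} : Set (Fin d → ℤ)) < 1 / 2 := by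
  have hd0 : 0 < d := by omega
  have h716 : hitProb k ({0, e} : Set (Fin d → ℤ)) ≤ 7/16 := by
    rw [hitProb]
    apply ciSup_le
    intro M
    have hdr : (0:ℝ) < (d:ℝ) := by exact_mod_cast hd0
    have hpow : (0:ℝ) < (2*(d:ℝ))^M := by positivity
    rw [div_le_iff₀ hpow]
    have hstop := Wk.stopping (M := M) hd0 k ({0, e} : Set (Fin d → ℤ)) (Wk.HH e)
      (Wk.HH_nonneg e) (fun x => Wk.HH_superh hd e x) (Wk.HH_on_target he)
    have hup : (2*(d:ℝ))^M * Wk.HH e k ≤ (2*(d:ℝ))^M * (7/12) :=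
      mul_le_mul_of_nonneg_left (Wk.HH_at_start he hk hne) hpow.le
    linarith
  exact lt_of_le_of_lt h716 (by norm_num)
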